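/- Let V be a module over a commutative ring k with a bilinear bracket [·,·] : V × V → V satisfying the left Leibniz (Loday) identity [a,[b,c]] = [[a,b],c] + [b,[a,c]], and let D : V → V be a k-linear map that is a derivation of the bracket (D[a,b] = [Da,b] + [a,Db]) and satisfies D ∘ D = 0. Then the derived bracket [a,b]_D := [Da, b] also satisfies the left Leibniz identity: [a,[b,c]_D]_D = [[a,b]_D, c]_D + [b,[a,c]_D]_D for all a, b, c ∈ V. -/
import Mathlib

/-- The derived bracket of a differential (left) Loday/Leibniz algebra is
again a left Loday bracket. -/
theorem derived_bracket_of_loday_is_loday {k V : Type*} [CommRing k] [AddCommGroup V]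
    [Module k V]
    (B : V →ₗ[k] V →ₗ[k] V)
    (hleib : ∀ a b c : V, B a (B b c) = B (B a b) c + B b (B a c))
    (D : V →ₗ[k] V)
    (hder : ∀ a b : V, D (B a b) = B (D a) b + B a (D b))
    (hsq : ∀ a : V, D (D a) = 0)
    (db : V → V → V) (hdb : ∀ a b : V, db a b = B (D a) b)
    (a b c : V) :
    db a (db b c) = db (db a b) c + db b (db a c) := by
  simp only [hdb, hder, hsq, map_zero, LinearMap.zero_apply, zero_add, LinearMap.add_apply,
    map_add]
  rw [hleib]
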